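/- Let 𝔇 be an additive category, F : Rings → 𝔇 a functor, and R a sum ring. Assume that the map γ = F(π₀) + F(π₁) : F(R×R) → F(R) ⊕ F(R) induced by the two projections is an isomorphism, and that F is M₂-stable on both R and M₂R. Then the composite F(⊞) ∘ γ⁻¹ : F(R) ⊕ F(R) → F(R) restricts to the identity on each copy of F(R), i.e. it is the codiagonal map. If moreover R is an infinite sum ring, then F(R) = 0. -/

import Mathlib

/-!
Statement 2.  Let `𝔇` be an additive category, `F : Rings → 𝔇` a functor, and
`R` a sum ring (a unital ring with elements `α₀, α₁, β₀, β₁` satisfying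
`α₀β₀ = α₁β₁ = 1` and `β₀α₀ + β₁α₁ = 1`; then `⊞(a,b) = β₀aα₀ + β₁bα₁` is a
unital ring homomorphism `R×R → R`).  Assume that
`γ = ⟨F(π₀), F(π₁)⟩ : F(R×R) → F(R) ⊕ F(R)` is an isomorphism and that `F` is
`M₂`-stable on both `R` and `M₂R`.  Then `F(⊞) ∘ γ⁻¹` restricts to the
identity on each copy of `F(R)` (it is the codiagonal map).  If moreover `R`
is an infinite sum ring (there is a unital ring homomorphism `a ↦ a^∞` with
`a ⊞ a^∞ = a^∞`), then `F(R) = 0`.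
-/

set_option autoImplicit false
noncomputable section

open CategoryTheory CategoryTheory.Limits

/-- `M₂A`: the ring of 2×2 matrices over `A`. -/
abbrev M2 (A : Type) [NonUnitalRing A] : Type := Matrix (Fin 2) (Fin 2) A

/-- The corner inclusion `ι₀ : A → M₂A`, `a ↦ a·e₁₁`. -/
def iota0 (A : Type) [NonUnitalRing A] : A →ₙ+* M2 A where
  toFun a := Matrix.single 0 0 a
  map_mul' := by
    intro a b
    simpa using (Matrix.single_mul_single_same (i := (0 : Fin 2)) (j := 0) (k := (0 : Fin 2)) (c := a) (d := b)).symm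
  map_zero' := by simp
  map_add' := by intro a b; ext i j; simp [Matrix.single]; aesop

/-- A functor from the category of (not necessarily unital) rings to a
category `𝔇`. -/
structure RingFunctor (D : Type*) [Category D] where
  obj : (A : Type) → [NonUnitalRing A] → D
  map : {A B : Type} → [NonUnitalRing A] → [NonUnitalRing B] →
    (A →ₙ+* B) → (obj A ⟶ obj B)
  map_id : ∀ (A : Type) [NonUnitalRing A],
    map (NonUnitalRingHom.id A) = 𝟙 (obj A)
  map_comp : ∀ {A B C : Type} [NonUnitalRing A] [NonUnitalRing B]
    [NonUnitalRing C] (f : A →ₙ+* B) (g : B →ₙ+* C),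
    map (g.comp f) = map f ≫ map g

/-- `F` is `M₂`-stable on `A` if it sends the corner inclusion
`ι₀ : A → M₂A` to an isomorphism. -/
def RingFunctor.M2Stable {D : Type*} [Category D] (F : RingFunctor D)
    (A : Type) [NonUnitalRing A] : Prop :=
  IsIso (F.map (iota0 A))


section Basics
variable {D : Type*} [Category D] (F : RingFunctor D)

lemma RingFunctor.isIso_of_inv {A B : Type} [NonUnitalRing A] [NonUnitalRing B]
    (f : A →ₙ+* B) (g : B →ₙ+* A) (h1 : g.comp f = NonUnitalRingHom.id A)
    (h2 : f.comp g = NonUnitalRingHom.id B) : IsIso (F.map f) :=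
  ⟨F.map g, by rw [← F.map_comp, h1, F.map_id], by rw [← F.map_comp, h2, F.map_id]⟩

lemma RingFunctor.map_eq_of_comp_eq {A B B' : Type} [NonUnitalRing A] [NonUnitalRing B]
    [NonUnitalRing B'] (h : A →ₙ+* B) (θ θ' : B →ₙ+* B')
    (hiso : IsIso (F.map h)) (he : θ.comp h = θ'.comp h) : F.map θ = F.map θ' := by
  have := congrArg F.map he
  rw [F.map_comp, F.map_comp] at this
  exact (cancel_epi (F.map h)).1 this

lemma RingFunctor.map_eq_id_of_comp_eq {A B : Type} [NonUnitalRing A] [NonUnitalRing B]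
    (h : A →ₙ+* B) (θ : B →ₙ+* B)
    (hiso : IsIso (F.map h)) (he : θ.comp h = h) : F.map θ = 𝟙 (F.obj B) := by
  have := congrArg F.map he
  rw [F.map_comp] at this
  rw [← F.map_id B]
  exact (cancel_epi (F.map h)).1 (by simpa [F.map_id] using this)

end Basics

section Ad
variable {C : Type} [Ring C]

def adH (u v : C) (hvu : v * u = 1) : C →ₙ+* C where
  toFun x := u * x * v
  map_mul' x y := by
    show u * (x * y) * v = (u * x * v) * (u * y * v)
    have h2 : (u * x * v) * (u * y * v) = (u * x) * (v * u) * (y * v) := by noncomm_ring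
    rw [h2, hvu, mul_one]; noncomm_ring
  map_zero' := by simp
  map_add' x y := by noncomm_ring

@[simp] lemma adH_apply (u v : C) (h : v * u = 1) (x : C) : adH u v h x = u * x * v := rfl

lemma adH_comp (u v u' v' : C) (h : v * u = 1) (h' : v' * u' = 1)
    (h'' : (v' * v) * (u * u') = 1) :
    (adH u v h).comp (adH u' v' h') = adH (u * u') (v' * v) h'' := by
  ext x
  show u * (u' * x * v') * v = (u * u') * x * (v' * v)
  noncomm_ring

lemma adH_one : adH (1 : C) 1 (by simp) = NonUnitalRingHom.id C := by
  ext x; simp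

/-- inverses are unique -/
lemma inv_unique' {u v w : C} (h1 : u * v = 1) (h2 : w * u = 1) : v = w := by
  calc v = 1 * v := by rw [one_mul]
  _ = w * u * v := by rw [h2]
  _ = w * (u * v) := by rw [mul_assoc]
  _ = w := by rw [h1, mul_one]

end Ad
section EE
variable {X : Type} [Ring X]

/-- 4×4 matrix units realized inside `M2 (M2 X)`. -/
def EE (p q : Fin 2 × Fin 2) (x : X) : M2 (M2 X) :=
  Matrix.single p.1 q.1 (Matrix.single p.2 q.2 x)

lemma EE_mul (p q r s : Fin 2 × Fin 2) (x y : X) :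
    EE p q x * EE r s y = if q = r then EE p s (x * y) else 0 := by
  rcases q with ⟨q1, q2⟩; rcases r with ⟨r1, r2⟩
  by_cases h1 : q1 = r1
  · subst h1
    by_cases h2 : q2 = r2
    · subst h2
      simp [EE, Matrix.single_mul_single_same]
    · have : ((q1, q2) : Fin 2 × Fin 2) ≠ (q1, r2) := by simp [h2]
      simp [EE, Matrix.single_mul_single_same, this,
        Matrix.single_mul_single_of_ne (h := h2), Matrix.single_zero]
      rw [show Matrix.single p.2 q2 x * Matrix.single r2 s.2 y = 0 from
        Matrix.single_mul_single_of_ne x p.2 q2 r2 h2 y, Matrix.single_zero]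
  · have : ((q1, q2) : Fin 2 × Fin 2) ≠ (r1, r2) := by simp [h1]
    simp [EE, Matrix.single_mul_single_of_ne (h := h1), this]
    exact Matrix.single_mul_single_of_ne _ p.1 q1 r1 h1 _

lemma EE_mul_same (p q s : Fin 2 × Fin 2) (x y : X) :
    EE p q x * EE q s y = EE p s (x * y) := by simp [EE_mul]

lemma EE_mul_ne {q r : Fin 2 × Fin 2} (h : q ≠ r) (p s : Fin 2 × Fin 2) (x y : X) :
    EE p q x * EE r s y = 0 := by simp [EE_mul, h]

@[simp] lemma EE_add (p q : Fin 2 × Fin 2) (x y : X) :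
    EE p q (x + y) = EE p q x + EE p q y := by
  simp [EE, Matrix.single_add]

lemma stdB_neg {n α : Type*} [DecidableEq n] [AddGroup α] (i j : n) (a : α) :
    Matrix.single i j (-a) = -(Matrix.single i j a) := by
  ext a' b'
  simp only [Matrix.single, Matrix.neg_apply, Matrix.of_apply]
  split <;> simp

@[simp] lemma EE_neg (p q : Fin 2 × Fin 2) (x : X) :
    EE p q (-x) = -(EE p q x) := by
  unfold EE
  rw [stdB_neg, stdB_neg]

@[simp] lemma EE_zero (p q : Fin 2 × Fin 2) : EE p q (0 : X) = 0 := by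
  simp [EE, Matrix.single_zero]

end EE
section Quad
variable {X : Type} [Ring X]

local notation "z0" => ((0, 0) : Fin 2 × Fin 2)
local notation "z1" => ((0, 1) : Fin 2 × Fin 2)

set_option maxHeartbeats 1000000 in
lemma mulQuad (a b c d a' b' c' d' : X) :
    (1 + EE z0 z0 a + EE z0 z1 b + EE z1 z0 c + EE z1 z1 d) *
    (1 + EE z0 z0 a' + EE z0 z1 b' + EE z1 z0 c' + EE z1 z1 d') =
    1 + EE z0 z0 (a + a' + (a * a' + b * c')) + EE z0 z1 (b + b' + (a * b' + b * d'))
      + EE z1 z0 (c + c' + (c * a' + d * c')) + EE z1 z1 (d + d' + (c * b' + d * d')) := by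
  have h01 : (z1 : Fin 2 × Fin 2) ≠ z0 := by decide
  have h10 : (z0 : Fin 2 × Fin 2) ≠ z1 := by decide
  simp only [mul_add, add_mul, one_mul, mul_one, EE_mul_same,
    EE_mul_ne h01, EE_mul_ne h10, EE_add, add_zero, zero_add]
  abel
end Quad
section Maps
variable {A B : Type} [NonUnitalRing A] [NonUnitalRing B]

/-- entrywise application of a hom to a 2×2 matrix -/
def M2map (f : A →ₙ+* B) : M2 A →ₙ+* M2 B where
  toFun m := m.map f
  map_mul' m n := by
    ext i j
    simp [Matrix.mul_apply, map_sum]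
  map_zero' := by ext i j; simp
  map_add' m n := by ext i j; simp

@[simp] lemma M2map_apply (f : A →ₙ+* B) (m : M2 A) : M2map f m = m.map f := rfl

lemma M2map_stdB (f : A →ₙ+* B) (i j : Fin 2) (x : A) :
    M2map f (Matrix.single i j x) = Matrix.single i j (f x) := by
  ext a b
  simp [Matrix.single, Matrix.map_apply, apply_ite f]

lemma M2map_comp {C : Type} [NonUnitalRing C] (f : A →ₙ+* B) (g : B →ₙ+* C) :
    (M2map g).comp (M2map f) = M2map (g.comp f) := by
  refine NonUnitalRingHom.ext fun m => ?_
  show (m.map f).map g = m.map (g.comp f)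
  rw [Matrix.map_map]; rfl

lemma M2map_id : M2map (NonUnitalRingHom.id A) = NonUnitalRingHom.id (M2 A) := by
  refine NonUnitalRingHom.ext fun m => ?_
  show m.map (NonUnitalRingHom.id A) = m
  ext i j; simp [Matrix.map_apply]

/-- naturality of the corner inclusion -/
lemma iota0_nat (f : A →ₙ+* B) :
    (iota0 B).comp f = (M2map f).comp (iota0 A) := by
  refine NonUnitalRingHom.ext fun x => ?_
  show Matrix.single 0 0 (f x) = M2map f (Matrix.single 0 0 x)
  rw [M2map_stdB]

end Maps

section Swap
variable (X : Type) [NonUnitalRing X]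

private def sw2 : Fin 2 ≃ Fin 2 := Equiv.swap 0 1

/-- conjugation by the permutation matrix `[[0,1],[1,0]]` -/
def swapM2 : M2 X →ₙ+* M2 X where
  toFun m := m.submatrix (sw2) (sw2)
  map_mul' m n := (Matrix.submatrix_mul_equiv m n _ sw2 _).symm
  map_zero' := by ext i j; simp
  map_add' m n := by ext i j; simp

variable {X}

lemma swapM2_stdB (i j : Fin 2) (x : X) :
    swapM2 X (Matrix.single i j x) =
      Matrix.single (sw2 i) (sw2 j) x := by
  have key : ∀ u w : Fin 2, (u = sw2 w) ↔ (sw2 u = w) := by decide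
  ext a b
  show (if i = sw2 a ∧ j = sw2 b then x else 0) = (if sw2 i = a ∧ sw2 j = b then x else 0)
  simp only [key]

lemma swapM2_invol (m : M2 X) : swapM2 X (swapM2 X m) = m := by
  ext i j
  show m (sw2 (sw2 i)) (sw2 (sw2 j)) = m i j
  simp [sw2]

lemma swapM2_comp_self : (swapM2 X).comp (swapM2 X) = NonUnitalRingHom.id (M2 X) := by
  refine NonUnitalRingHom.ext fun m => swapM2_invol m

end Swap
section Corners
variable {D : Type*} [Category D] (F : RingFunctor D)
variable {C : Type} [Ring C]

local notation "z0" => ((0, 0) : Fin 2 × Fin 2)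
local notation "z1" => ((0, 1) : Fin 2 × Fin 2)
local notation "z2" => ((1, 0) : Fin 2 × Fin 2)
local notation "z3" => ((1, 1) : Fin 2 × Fin 2)

def cornerH (p : Fin 2 × Fin 2) : C →ₙ+* M2 (M2 C) where
  toFun x := EE p p x
  map_mul' x y := (EE_mul_same p p p x y).symm
  map_zero' := EE_zero p p
  map_add' x y := EE_add p p x y

@[simp] lemma cornerH_apply (p : Fin 2 × Fin 2) (x : C) : cornerH p x = EE p p x := rfl

lemma cornerH_z0_eq : (cornerH z0 : C →ₙ+* M2 (M2 C)) = (iota0 (M2 C)).comp (iota0 C) := by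
  refine NonUnitalRingHom.ext fun x => ?_
  rfl

lemma cornerH_z2_eq :
    (cornerH z2 : C →ₙ+* M2 (M2 C)) = (swapM2 (M2 C)).comp (cornerH z0) := by
  refine NonUnitalRingHom.ext fun x => ?_
  show EE z2 z2 x = swapM2 (M2 C) (EE z0 z0 x)
  have h0 : sw2 (0 : Fin 2) = 1 := by decide
  rw [show (EE z0 z0 x : M2 (M2 C)) =
        Matrix.single 0 0 (Matrix.single 0 0 x) from rfl,
    swapM2_stdB, h0]
  rfl

lemma cornerH_z1_eq :
    (cornerH z1 : C →ₙ+* M2 (M2 C)) = (M2map (swapM2 C)).comp (cornerH z0) := by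
  refine NonUnitalRingHom.ext fun x => ?_
  show EE z1 z1 x = M2map (swapM2 C) (EE z0 z0 x)
  have h0 : sw2 (0 : Fin 2) = 1 := by decide
  rw [show (EE z0 z0 x : M2 (M2 C)) =
        Matrix.single 0 0 (Matrix.single 0 0 x) from rfl,
    M2map_stdB, swapM2_stdB, h0]
  rfl

lemma cornerH_z3_eq :
    (cornerH z3 : C →ₙ+* M2 (M2 C)) = (M2map (swapM2 C)).comp (cornerH z2) := by
  refine NonUnitalRingHom.ext fun x => ?_
  show EE z3 z3 x = M2map (swapM2 C) (EE z2 z2 x)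
  have h0 : sw2 (0 : Fin 2) = 1 := by decide
  rw [show (EE z2 z2 x : M2 (M2 C)) =
        Matrix.single 1 1 (Matrix.single 0 0 x) from rfl,
    M2map_stdB, swapM2_stdB, h0]
  rfl

lemma isIso_swapF (X : Type) [NonUnitalRing X] : IsIso (F.map (swapM2 X)) :=
  F.isIso_of_inv _ (swapM2 X) swapM2_comp_self swapM2_comp_self

lemma isIso_M2swapF (X : Type) [NonUnitalRing X] : IsIso (F.map (M2map (swapM2 X))) := by
  refine F.isIso_of_inv _ (M2map (swapM2 X)) ?_ ?_ <;>
    rw [M2map_comp, swapM2_comp_self, M2map_id]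

lemma isIso_cornerF (hC : IsIso (F.map (iota0 C))) (hC2 : IsIso (F.map (iota0 (M2 C))))
    (p : Fin 2 × Fin 2) : IsIso (F.map (cornerH p : C →ₙ+* M2 (M2 C))) := by
  have h0 : IsIso (F.map (cornerH z0 : C →ₙ+* M2 (M2 C))) := by
    rw [cornerH_z0_eq, F.map_comp]
    exact @IsIso.comp_isIso _ _ _ _ _ _ _ hC hC2
  have h2 : IsIso (F.map (cornerH z2 : C →ₙ+* M2 (M2 C))) := by
    rw [cornerH_z2_eq, F.map_comp]
    exact @IsIso.comp_isIso _ _ _ _ _ _ _ h0 (isIso_swapF F (M2 C))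
  have h1 : IsIso (F.map (cornerH z1 : C →ₙ+* M2 (M2 C))) := by
    rw [cornerH_z1_eq, F.map_comp]
    exact @IsIso.comp_isIso _ _ _ _ _ _ _ h0 (isIso_M2swapF F C)
  have h3 : IsIso (F.map (cornerH z3 : C →ₙ+* M2 (M2 C))) := by
    rw [cornerH_z3_eq, F.map_comp]
    exact @IsIso.comp_isIso _ _ _ _ _ _ _ h2 (isIso_M2swapF F C)
  rcases p with ⟨i, j⟩
  fin_cases i <;> fin_cases j <;> assumption

lemma genTriv (g g' : M2 (M2 C)) (hgg' : g * g' = 1) (hg'g : g' * g = 1)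
    (p : Fin 2 × Fin 2) (hiso : IsIso (F.map (cornerH p : C →ₙ+* M2 (M2 C))))
    (hcomm : ∀ x : C, g * EE p p x = EE p p x * g) :
    F.map (adH g g' hg'g) = 𝟙 (F.obj (M2 (M2 C))) := by
  refine F.map_eq_id_of_comp_eq (cornerH p) _ hiso ?_
  refine NonUnitalRingHom.ext fun x => ?_
  show g * (EE p p x) * g' = EE p p x
  rw [hcomm, mul_assoc, hgg', mul_one]

end Corners
section Factor
variable {D : Type*} [Category D] (F : RingFunctor D)

lemma mulInv {C' : Type} [Ring C'] {g g' k k' : C'}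
    (hg : g * g' = 1) (hg' : g' * g = 1) (hk : k * k' = 1) (hk' : k' * k = 1) :
    (g * k) * (k' * g') = 1 := by
  rw [mul_assoc, ← mul_assoc k, hk, one_mul, hg]

lemma F_ad_factor {C' : Type} [Ring C'] (g g' k k' q : C')
    (hg : g * g' = 1) (hg' : g' * g = 1) (hk : k * k' = 1) (hk' : k' * k = 1)
    (hq' : q * (g * k) = 1) :
    F.map (adH (g * k) q hq') = F.map (adH k k' hk') ≫ F.map (adH g g' hg') := by
  have h1 : (g * k) * (k' * g') = 1 := mulInv hg hg' hk hk'
  have hq : k' * g' = q := inv_unique' h1 hq'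
  have h2 : (k' * g') * (g * k) = 1 := mulInv hk' hk hg' hg
  rw [← F.map_comp, adH_comp g g' k k' hg' hk' h2]
  congr 1
  refine NonUnitalRingHom.ext fun x => ?_
  rw [adH_apply, adH_apply, hq]

lemma F_ad_cancel {C' : Type} [Ring C'] (gm g' : C')
    (h1 : gm * g' = 1) (h2 : g' * gm = 1) :
    F.map (adH gm g' h2) ≫ F.map (adH g' gm h1) = 𝟙 (F.obj C') := by
  rw [← F.map_comp, adH_comp g' gm gm g' h1 h2 (by rw [h2, one_mul])]
  have : adH (g' * gm) (g' * gm) (by rw [h2, one_mul]) = NonUnitalRingHom.id C' := by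
    refine NonUnitalRingHom.ext fun x => ?_
    rw [adH_apply, h2, one_mul, mul_one]
    rfl
  rw [this, F.map_id]

end Factor

section Elem
variable {D : Type*} [Category D] (F : RingFunctor D)
variable {C : Type} [Ring C]

lemma elem_mul {X : Type} [Ring X] {p q : Fin 2 × Fin 2} (hqp : q ≠ p) (x y : X) :
    (1 + EE p q x) * (1 + EE p q y) = 1 + EE p q (x + y) := by
  simp only [mul_add, add_mul, one_mul, mul_one, EE_mul_ne hqp, add_zero, EE_add]
  abel

lemma elemTriv (p q r l : Fin 2 × Fin 2) (x : C)
    (hqp : q ≠ p) (hrp : r ≠ p) (hqr : q ≠ r)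
    (hql : q ≠ l) (hlr : l ≠ r)
    (hlis : IsIso (F.map (cornerH l : C →ₙ+* M2 (M2 C))))
    (hinv : (1 + EE p q (-x)) * (1 + EE p q x) = 1) :
    F.map (adH (1 + EE p q x) (1 + EE p q (-x)) hinv) = 𝟙 (F.obj (M2 (M2 C))) := by
  set M : M2 (M2 C) := 1 + EE p r x with hM_def
  set M' : M2 (M2 C) := 1 + EE p r (-x) with hM'_def
  set N : M2 (M2 C) := 1 + EE r q (1 : C) with hN_def
  set N' : M2 (M2 C) := 1 + EE r q (-1 : C) with hN'_def
  have hMM' : M * M' = 1 := by rw [hM_def, hM'_def, elem_mul hrp]; simp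
  have hM'M : M' * M = 1 := by rw [hM_def, hM'_def, elem_mul hrp]; simp
  have hNN' : N * N' = 1 := by rw [hN_def, hN'_def, elem_mul hqr]; simp
  have hN'N : N' * N = 1 := by rw [hN_def, hN'_def, elem_mul hqr]; simp
  -- the commutator identity
  have h1 : M * N = 1 + EE r q (1 : C) + EE p r x + EE p q x := by
    rw [hM_def, hN_def]
    simp only [mul_add, add_mul, one_mul, mul_one, EE_mul_same, mul_one]
    abel
  have h2 : M' * N' = 1 + EE r q (-1 : C) + EE p r (-x) + EE p q x := by
    rw [hM'_def, hN'_def]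
    simp only [mul_add, add_mul, one_mul, mul_one, EE_mul_same, neg_mul_neg, mul_one]
    abel
  have hfact : (M * N) * (M' * N') = 1 + EE p q x := by
    rw [h1, h2]
    simp only [mul_add, add_mul, one_mul, mul_one, EE_mul_same,
      EE_mul_ne hqr, EE_mul_ne hqp, EE_mul_ne hrp, add_zero, zero_add, mul_neg,
      mul_one, EE_neg, neg_neg]
    abel
  -- units for the two factors
  have hgg' : (M * N) * (N' * M') = 1 := mulInv hMM' hM'M hNN' hN'N
  have hg'g : (N' * M') * (M * N) = 1 := mulInv hN'N hNN' hM'M hMM'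
  have hkk' : (M' * N') * (N * M) = 1 := mulInv hM'M hMM' hN'N hNN'
  have hk'k : (N * M) * (M' * N') = 1 := mulInv hNN' hN'N hMM' hM'M
  -- rewrite the target adH
  have hq' : (1 + EE p q (-x)) * ((M * N) * (M' * N')) = 1 := by rw [hfact]; exact hinv
  have e1 : adH (1 + EE p q x) (1 + EE p q (-x)) hinv
      = adH ((M * N) * (M' * N')) (1 + EE p q (-x)) hq' := by
    refine NonUnitalRingHom.ext fun y => ?_
    rw [adH_apply, adH_apply, hfact]
  rw [e1]
  rw [F_ad_factor F (M * N) (N' * M') (M' * N') (N * M) _ hgg' hg'g hkk' hk'k hq']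
  have hNtriv : ∀ (hx : N' * N = 1), F.map (adH N N' hx) = 𝟙 _ := by
    intro hx
    refine genTriv F N N' hNN' hx l hlis fun y => ?_
    simp [hN_def, add_mul, mul_add, EE_mul_ne hql, EE_mul_ne hlr]
  have hN'triv : ∀ (hx : N * N' = 1), F.map (adH N' N hx) = 𝟙 _ := by
    intro hx
    refine genTriv F N' N hN'N hx l hlis fun y => ?_
    simp only [hN'_def, EE_neg]
    simp [add_mul, mul_add, EE_mul_ne hql, EE_mul_ne hlr]
  rw [F_ad_factor F M' M N' N _ hM'M hMM' hN'N hNN' hk'k]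
  rw [F_ad_factor F M M' N N' _ hMM' hM'M hNN' hN'N hg'g]
  rw [hNtriv, hN'triv, Category.id_comp, Category.id_comp]
  exact F_ad_cancel F M' M hM'M hMM'

end Elem
section AdTriv
variable {D : Type*} [Category D] (F : RingFunctor D)
variable {C : Type} [Ring C]

local notation "z0" => ((0, 0) : Fin 2 × Fin 2)
local notation "z1" => ((0, 1) : Fin 2 × Fin 2)
local notation "z2" => ((1, 0) : Fin 2 × Fin 2)
local notation "z3" => ((1, 1) : Fin 2 × Fin 2)

/-- canonical "upper-left 2×2 block" element -/
def quad (a b c d : C) : M2 (M2 C) :=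
  1 + EE z0 z0 a + EE z0 z1 b + EE z1 z0 c + EE z1 z1 d

lemma quadMul (a b c d a' b' c' d' : C) :
    quad a b c d * quad a' b' c' d' =
    quad (a + a' + (a * a' + b * c')) (b + b' + (a * b' + b * d'))
      (c + c' + (c * a' + d * c')) (d + d' + (c * b' + d * d')) :=
  mulQuad a b c d a' b' c' d'

lemma quad_congr {a b c d a' b' c' d' : C} (ha : a = a') (hb : b = b') (hc : c = c')
    (hd : d = d') : quad a b c d = quad a' b' c' d' := by rw [ha, hb, hc, hd]

@[simp] lemma quad_zero : (quad 0 0 0 0 : M2 (M2 C)) = 1 := by simp [quad]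

variable (u v : C) (huv : u * v = 1) (hvu : v * u = 1)

section WH
variable {u v}
include huv hvu

lemma pr1 : (quad 0 u 0 0 : M2 (M2 C)) * quad 0 0 (-v) 0 = quad (-1) u (-v) 0 := by
  rw [quadMul]
  apply quad_congr <;>
      (try simp only [mul_neg, neg_mul, mul_one, one_mul, mul_zero, zero_mul, add_zero,
        zero_add, neg_zero, neg_neg, huv, hvu]) <;> (try abel)

lemma pr2 : (quad (-1) u (-v) 0 : M2 (M2 C)) * quad 0 u 0 0 = quad (-1) u (-v) (-1) := by
  rw [quadMul]
  apply quad_congr <;>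
      (try simp only [mul_neg, neg_mul, mul_one, one_mul, mul_zero, zero_mul, add_zero,
        zero_add, neg_zero, neg_neg, huv, hvu]) <;> (try abel)

lemma pr3 : (quad (-1) u (-v) (-1) : M2 (M2 C)) * quad (-1) (-1) 1 (-1)
    = quad (u - 1) 0 0 (v - 1) := by
  rw [quadMul]
  apply quad_congr <;>
      (try simp only [mul_neg, neg_mul, mul_one, one_mul, mul_zero, zero_mul, add_zero,
        zero_add, neg_zero, neg_neg, huv, hvu]) <;> (try abel)

lemma pr4 : (quad (u - 1) 0 0 (v - 1) : M2 (M2 C)) * quad 0 0 0 (u - 1)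
    = quad (u - 1) 0 0 0 := by
  rw [quadMul]
  apply quad_congr <;>
      (try simp only [mul_neg, neg_mul, mul_one, one_mul, mul_zero, zero_mul, add_zero,
        zero_add, neg_zero, neg_neg, sub_mul, mul_sub, sub_self, huv, hvu]) <;> (try abel)

lemma uB1 : (quad 0 u 0 0 : M2 (M2 C)) * quad 0 (-u) 0 0 = 1 := by
  rw [quadMul]
  simp only [mul_neg, neg_mul, mul_one, one_mul, mul_zero, zero_mul, add_zero,
    zero_add, neg_zero, neg_neg, huv, hvu]
  simp [quad]

lemma uB1' : (quad 0 (-u) 0 0 : M2 (M2 C)) * quad 0 u 0 0 = 1 := by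
  rw [quadMul]
  simp only [mul_neg, neg_mul, mul_one, one_mul, mul_zero, zero_mul, add_zero,
    zero_add, neg_zero, neg_neg, huv, hvu]
  simp [quad]

lemma uB2 : (quad 0 0 (-v) 0 : M2 (M2 C)) * quad 0 0 v 0 = 1 := by
  rw [quadMul]
  simp only [mul_neg, neg_mul, mul_one, one_mul, mul_zero, zero_mul, add_zero,
    zero_add, neg_zero, neg_neg, huv, hvu]
  simp [quad]

lemma uB2' : (quad 0 0 v 0 : M2 (M2 C)) * quad 0 0 (-v) 0 = 1 := by
  rw [quadMul]
  simp only [mul_neg, neg_mul, mul_one, one_mul, mul_zero, zero_mul, add_zero,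
    zero_add, neg_zero, neg_neg, huv, hvu]
  simp [quad]

lemma uDm : (quad 0 0 0 (u - 1) : M2 (M2 C)) * quad 0 0 0 (v - 1) = 1 := by
  rw [quadMul]
  have : (u - 1) + (v - 1) + ((u - 1) * (v - 1)) = u * v - 1 := by noncomm_ring
  simp only [mul_neg, neg_mul, mul_one, one_mul, mul_zero, zero_mul, add_zero, zero_add]
  rw [this, huv]
  simp [quad]

lemma uDm' : (quad 0 0 0 (v - 1) : M2 (M2 C)) * quad 0 0 0 (u - 1) = 1 := by
  rw [quadMul]
  have : (v - 1) + (u - 1) + ((v - 1) * (u - 1)) = v * u - 1 := by noncomm_ring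
  simp only [mul_neg, neg_mul, mul_one, one_mul, mul_zero, zero_mul, add_zero, zero_add]
  rw [this, hvu]
  simp [quad]

lemma uT : (quad (u - 1) 0 0 0 : M2 (M2 C)) * quad (v - 1) 0 0 0 = 1 := by
  rw [quadMul]
  have : (u - 1) + (v - 1) + ((u - 1) * (v - 1)) = u * v - 1 := by noncomm_ring
  simp only [mul_neg, neg_mul, mul_one, one_mul, mul_zero, zero_mul, add_zero, zero_add]
  rw [this, huv]
  simp [quad]

lemma uT' : (quad (v - 1) 0 0 0 : M2 (M2 C)) * quad (u - 1) 0 0 0 = 1 := by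
  rw [quadMul]
  have : (v - 1) + (u - 1) + ((v - 1) * (u - 1)) = v * u - 1 := by noncomm_ring
  simp only [mul_neg, neg_mul, mul_one, one_mul, mul_zero, zero_mul, add_zero, zero_add]
  rw [this, hvu]
  simp [quad]

end WH

lemma uRho : (quad (-1) (-1) 1 (-1) : M2 (M2 C)) * quad (-1) 1 (-1) (-1) = 1 := by
  rw [quadMul]
  simp only [mul_neg, neg_mul, mul_one, one_mul, neg_neg]
  simp [quad]

lemma uRho' : (quad (-1) 1 (-1) (-1) : M2 (M2 C)) * quad (-1) (-1) 1 (-1) = 1 := by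
  rw [quadMul]
  simp only [mul_neg, neg_mul, mul_one, one_mul, neg_neg]
  simp [quad]
end AdTriv
section AdTrivMain
variable {D : Type*} [Category D] (F : RingFunctor D)
variable {C : Type} [Ring C]

local notation "z0" => ((0, 0) : Fin 2 × Fin 2)
local notation "z1" => ((0, 1) : Fin 2 × Fin 2)
local notation "z2" => ((1, 0) : Fin 2 × Fin 2)
local notation "z3" => ((1, 1) : Fin 2 × Fin 2)

lemma adH_congr {C' : Type} [Ring C'] {g g' k k' : C'} (hg : g = k) (hg' : g' = k')
    (h1 : g' * g = 1) (h2 : k' * k = 1) : adH g g' h1 = adH k k' h2 := by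
  subst hg; subst hg'; rfl

lemma adTriv (hC : IsIso (F.map (iota0 C))) (hC2 : IsIso (F.map (iota0 (M2 C))))
    (u v : C) (huv : u * v = 1) (hvu : v * u = 1) :
    F.map (adH u v hvu) = 𝟙 (F.obj C) := by
  have hcorner := isIso_cornerF F hC hC2
  -- generator triviality: B1
  have qB1 : (quad 0 u 0 0 : M2 (M2 C)) = 1 + EE z0 z1 u := by simp [quad]
  have qB1' : (quad 0 (-u) 0 0 : M2 (M2 C)) = 1 + EE z0 z1 (-u) := by simp [quad]
  have hinvB1 : ((1 : M2 (M2 C)) + EE z0 z1 (-u)) * (1 + EE z0 z1 u) = 1 := by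
    rw [← qB1', ← qB1]; exact uB1' huv hvu
  have hinvB1r : ((1 : M2 (M2 C)) + EE z0 z1 u) * (1 + EE z0 z1 (-u)) = 1 := by
    rw [← qB1', ← qB1]; exact uB1 huv hvu
  have trivB1 : F.map (adH ((1 : M2 (M2 C)) + EE z0 z1 u) (1 + EE z0 z1 (-u)) hinvB1)
      = 𝟙 _ :=
    elemTriv F z0 z1 z2 z3 u (by decide) (by decide) (by decide) (by decide) (by decide)
      (hcorner z3) hinvB1
  -- generator triviality: B2
  have qB2 : (quad 0 0 (-v) 0 : M2 (M2 C)) = 1 + EE z1 z0 (-v) := by simp [quad]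
  have qB2' : (quad 0 0 v 0 : M2 (M2 C)) = 1 + EE z1 z0 (-(-v)) := by simp [quad]
  have hinvB2 : ((1 : M2 (M2 C)) + EE z1 z0 (-(-v))) * (1 + EE z1 z0 (-v)) = 1 := by
    rw [← qB2', ← qB2]; exact uB2' huv hvu
  have trivB2 : F.map (adH ((1 : M2 (M2 C)) + EE z1 z0 (-v)) (1 + EE z1 z0 (-(-v))) hinvB2)
      = 𝟙 _ :=
    elemTriv F z1 z0 z2 z3 (-v) (by decide) (by decide) (by decide) (by decide) (by decide)
      (hcorner z3) hinvB2
  -- generator triviality: ρ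
  have trivRho : ∀ h : (quad (-1) 1 (-1) (-1) : M2 (M2 C)) * quad (-1) (-1) 1 (-1) = 1,
      F.map (adH (quad (-1) (-1) 1 (-1) : M2 (M2 C)) (quad (-1) 1 (-1) (-1)) h) = 𝟙 _ := by
    intro h
    refine genTriv F _ _ (uRho) h z2 (hcorner z2) fun x => ?_
    have n1 : (z0 : Fin 2 × Fin 2) ≠ z2 := by decide
    have n2 : (z1 : Fin 2 × Fin 2) ≠ z2 := by decide
    have n3 : (z2 : Fin 2 × Fin 2) ≠ z0 := by decide
    have n4 : (z2 : Fin 2 × Fin 2) ≠ z1 := by decide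
    simp only [quad, add_mul, mul_add, one_mul, mul_one, EE_neg, neg_mul, mul_neg,
      EE_mul_ne n1, EE_mul_ne n2, EE_mul_ne n3, EE_mul_ne n4, neg_zero, add_zero, zero_add]
  -- generator triviality: Dm
  have trivDm : ∀ h : (quad 0 0 0 (v - 1) : M2 (M2 C)) * quad 0 0 0 (u - 1) = 1,
      F.map (adH (quad 0 0 0 (u - 1) : M2 (M2 C)) (quad 0 0 0 (v - 1)) h) = 𝟙 _ := by
    intro h
    refine genTriv F _ _ (uDm huv hvu) h z0 (hcorner z0) fun x => ?_
    have n1 : (z1 : Fin 2 × Fin 2) ≠ z0 := by decide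
    have n2 : (z0 : Fin 2 × Fin 2) ≠ z1 := by decide
    simp only [quad, add_mul, mul_add, one_mul, mul_one, EE_neg, neg_mul, mul_neg,
      EE_mul_ne n1, EE_mul_ne n2, neg_zero, add_zero, zero_add, EE_zero]
  -- abbreviations
  set B1 : M2 (M2 C) := quad 0 u 0 0 with hB1d
  set B1' : M2 (M2 C) := quad 0 (-u) 0 0 with hB1d'
  set B2 : M2 (M2 C) := quad 0 0 (-v) 0 with hB2d
  set B2' : M2 (M2 C) := quad 0 0 v 0 with hB2d'
  set Rh : M2 (M2 C) := quad (-1) (-1) 1 (-1) with hRhd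
  set Rh' : M2 (M2 C) := quad (-1) 1 (-1) (-1) with hRhd'
  set Dm : M2 (M2 C) := quad 0 0 0 (u - 1) with hDmd
  set Dm' : M2 (M2 C) := quad 0 0 0 (v - 1) with hDmd'
  set T : M2 (M2 C) := quad (u - 1) 0 0 0 with hTd
  set T' : M2 (M2 C) := quad (v - 1) 0 0 0 with hTd'
  have u1 : B1 * B1' = 1 := uB1 huv hvu
  have u1' : B1' * B1 = 1 := uB1' huv hvu
  have u2 : B2 * B2' = 1 := uB2 huv hvu
  have u2' : B2' * B2 = 1 := uB2' huv hvu
  have ur : Rh * Rh' = 1 := uRho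
  have ur' : Rh' * Rh = 1 := uRho'
  have ud : Dm * Dm' = 1 := uDm huv hvu
  have ud' : Dm' * Dm = 1 := uDm' huv hvu
  have ut : T * T' = 1 := uT huv hvu
  have ut' : T' * T = 1 := uT' huv hvu
  have uP1 : (B1 * B2) * (B2' * B1') = 1 := mulInv u1 u1' u2 u2'
  have uP1' : (B2' * B1') * (B1 * B2) = 1 := mulInv u2' u2 u1' u1
  have uP2 : ((B1 * B2) * B1) * (B1' * (B2' * B1')) = 1 := mulInv uP1 uP1' u1 u1'
  have uP2' : (B1' * (B2' * B1')) * ((B1 * B2) * B1) = 1 := mulInv u1' u1 uP1' uP1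
  have uP3 : (((B1 * B2) * B1) * Rh) * (Rh' * (B1' * (B2' * B1'))) = 1 :=
    mulInv uP2 uP2' ur ur'
  have uP3' : (Rh' * (B1' * (B2' * B1'))) * (((B1 * B2) * B1) * Rh) = 1 :=
    mulInv ur' ur uP2' uP2
  have hfact : (((B1 * B2) * B1) * Rh) * Dm = T := by
    rw [hB1d, hB2d, hRhd, hDmd, hTd, pr1 huv hvu, pr2 huv hvu, pr3 huv hvu, pr4 huv hvu]
  have h4 : T' * ((((B1 * B2) * B1) * Rh) * Dm) = 1 := by rw [hfact]; exact ut'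
  have eT : adH T T' ut' = adH ((((B1 * B2) * B1) * Rh) * Dm) T' h4 :=
    adH_congr hfact.symm rfl _ _
  have trivT : F.map (adH T T' ut') = 𝟙 _ := by
    rw [eT]
    rw [F_ad_factor F (((B1 * B2) * B1) * Rh) (Rh' * (B1' * (B2' * B1'))) Dm Dm' T'
      uP3 uP3' ud ud' h4]
    rw [F_ad_factor F ((B1 * B2) * B1) (B1' * (B2' * B1')) Rh Rh'
      (Rh' * (B1' * (B2' * B1'))) uP2 uP2' ur ur' uP3']
    rw [F_ad_factor F (B1 * B2) (B2' * B1') B1 B1' (B1' * (B2' * B1')) uP1 uP1' u1 u1' uP2']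
    rw [F_ad_factor F B1 B1' B2 B2' (B2' * B1') u1 u1' u2 u2' uP1']
    have e1 : adH B1 B1' u1' = adH ((1 : M2 (M2 C)) + EE z0 z1 u) (1 + EE z0 z1 (-u)) hinvB1 :=
      adH_congr qB1 qB1' _ _
    have e2 : adH B2 B2' u2' = adH ((1 : M2 (M2 C)) + EE z1 z0 (-v)) (1 + EE z1 z0 (-(-v))) hinvB2 :=
      adH_congr qB2 qB2' _ _
    rw [e1, e2, trivB1, trivB2, trivRho ur', trivDm ud']
    simp
  -- corner relation
  have qT : T = (1 : M2 (M2 C)) + EE z0 z0 (u - 1) := by rw [hTd]; simp [quad]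
  have qT' : T' = (1 : M2 (M2 C)) + EE z0 z0 (v - 1) := by rw [hTd']; simp [quad]
  have hrel : (cornerH z0 : C →ₙ+* M2 (M2 C)).comp (adH u v hvu)
      = (adH T T' ut').comp (cornerH z0) := by
    refine NonUnitalRingHom.ext fun x => ?_
    show EE z0 z0 (u * x * v) = T * EE z0 z0 x * T'
    rw [qT, qT']
    rw [add_mul, one_mul, EE_mul_same, ← EE_add, mul_add, mul_one, EE_mul_same, ← EE_add]
    refine congrArg (EE z0 z0) ?_
    noncomm_ring
  have hFrel := congrArg F.map hrel
  rw [F.map_comp, F.map_comp, trivT, Category.comp_id] at hFrel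
  have : Mono (F.map (cornerH z0 : C →ₙ+* M2 (M2 C))) := by
    have := hcorner z0
    infer_instance
  have hFrel2 : F.map (adH u v hvu) ≫ F.map (cornerH z0 : C →ₙ+* M2 (M2 C))
      = 𝟙 (F.obj C) ≫ F.map (cornerH z0 : C →ₙ+* M2 (M2 C)) := by
    rw [Category.id_comp]; exact hFrel
  exact (cancel_mono (F.map (cornerH z0 : C →ₙ+* M2 (M2 C)))).1 hFrel2

end AdTrivMain
section ConjLemma
variable {D : Type*} [Category D] (F : RingFunctor D)

lemma conjLemma {A B : Type} [NonUnitalRing A] [Ring B]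
    (hB : IsIso (F.map (iota0 B)))
    (hB2 : IsIso (F.map (iota0 (M2 B))))
    (hB4 : IsIso (F.map (iota0 (M2 (M2 B)))))
    (f g : A →ₙ+* B) (V W : B)
    (hVW : V * W = 1)
    (hWf : ∀ x, (W * V) * f x = f x)
    (hfW : ∀ x, f x * (W * V) = f x)
    (hg : ∀ x, g x = V * f x * W) :
    F.map g = F.map f := by
  have hA : V * (1 - W * V) = 0 := by
    rw [mul_sub, mul_one, ← mul_assoc, hVW, one_mul, sub_self]
  have hBz : (1 - W * V) * W = 0 := by
    rw [sub_mul, one_mul, mul_assoc, hVW, mul_one, sub_self]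
  have hWVWV : (W * V) * (W * V) = W * V := by
    rw [mul_assoc, ← mul_assoc V, hVW, one_mul]
  have hE : (1 - W * V) * (1 - W * V) = 1 - W * V := by
    rw [sub_mul, one_mul, mul_sub, mul_one, hWVWV]
    abel
  set U : M2 B := Matrix.of ![![V, 0], ![1 - W * V, W]] with hU
  set U' : M2 B := Matrix.of ![![W, 1 - W * V], ![0, V]] with hU'
  have hUU' : U * U' = 1 := by
    ext i j
    fin_cases i <;> fin_cases j <;>
      simp [hU, hU', Matrix.mul_apply, Fin.sum_univ_two, Matrix.one_apply, hVW, hA, hBz, hE]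
  have hU'U : U' * U = 1 := by
    ext i j
    fin_cases i <;> fin_cases j <;>
      simp [hU, hU', Matrix.mul_apply, Fin.sum_univ_two, Matrix.one_apply, hVW, hA, hBz, hE]
  have hz1 : ∀ x, (1 - W * V) * f x = 0 := fun x => by
    rw [sub_mul, one_mul, hWf, sub_self]
  have hz2 : ∀ x, f x * (1 - W * V) = 0 := fun x => by
    rw [mul_sub, mul_one, hfW, sub_self]
  have hconj : ∀ x, U * (Matrix.single 0 0 (f x)) * U' =
      Matrix.single 0 0 (g x) := by
    intro x
    have e1 : U * Matrix.single 0 0 (f x)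
        = Matrix.single 0 0 (V * f x) := by
      ext i j
      fin_cases i <;> fin_cases j <;>
        simp [hU, Matrix.mul_apply, Fin.sum_univ_two, Matrix.single, hz1 x]
    rw [e1]
    ext i j
    fin_cases i <;> fin_cases j <;>
      simp [hU', Matrix.mul_apply, Fin.sum_univ_two, Matrix.single, hg x,
        mul_assoc, hz2 x]
  have hrel : (iota0 B).comp g = (adH U U' hU'U).comp ((iota0 B).comp f) := by
    refine NonUnitalRingHom.ext fun x => ?_
    show Matrix.single 0 0 (g x) = U * (Matrix.single 0 0 (f x)) * U'
    exact (hconj x).symm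
  have hFrel := congrArg F.map hrel
  rw [F.map_comp, F.map_comp, F.map_comp] at hFrel
  rw [adTriv F hB2 hB4 U U' hUU' hU'U, Category.comp_id] at hFrel
  have : Mono (F.map (iota0 B)) := by
    have := hB
    infer_instance
  exact (cancel_mono (F.map (iota0 B))).1 hFrel

end ConjLemma
/-- second corner inclusion -/
def iota1 (A : Type) [NonUnitalRing A] : A →ₙ+* M2 A where
  toFun a := Matrix.single 1 1 a
  map_mul' := by
    intro a b
    simpa using (Matrix.single_mul_single_same (1 : Fin 2) 1 (1 : Fin 2) (c := a) b).symm
  map_zero' := by simp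
  map_add' a b := Matrix.single_add 1 1 a b

section Transfer
variable {D : Type*} [Category D] (F : RingFunctor D)

lemma transferStable {A B : Type} [NonUnitalRing A] [NonUnitalRing B]
    (e : A →ₙ+* B) (e' : B →ₙ+* A)
    (h1 : e'.comp e = NonUnitalRingHom.id A) (h2 : e.comp e' = NonUnitalRingHom.id B)
    (hA : IsIso (F.map (iota0 A))) : IsIso (F.map (iota0 B)) := by
  have hFe : IsIso (F.map e) := F.isIso_of_inv e e' h1 h2
  have hFM : IsIso (F.map (M2map e)) := by
    refine F.isIso_of_inv (M2map e) (M2map e') ?_ ?_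
    · rw [M2map_comp, h1, M2map_id]
    · rw [M2map_comp, h2, M2map_id]
  have heq := congrArg F.map (iota0_nat e)
  rw [F.map_comp, F.map_comp] at heq
  have : F.map (iota0 B) = inv (F.map e) ≫ (F.map (iota0 A) ≫ F.map (M2map e)) := by
    rw [← heq, IsIso.inv_hom_id_assoc]
  rw [this]
  infer_instance

end Transfer

section SumRing
variable {D : Type*} [Category D] (F : RingFunctor D)
variable {R : Type} [Ring R] (a0 a1 b0 b1 : R)
variable (h00 : a0 * b0 = 1) (h11 : a1 * b1 = 1) (hsum : b0 * a0 + b1 * a1 = 1)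

section ortho
include h00 h11 hsum

lemma ortho01 : a0 * b1 = 0 := by
  have hb : b1 * a1 = 1 - b0 * a0 := eq_sub_of_add_eq' hsum
  have h1 : a0 * (b1 * a1) = 0 := by
    rw [hb, mul_sub, mul_one, ← mul_assoc, h00, one_mul, sub_self]
  calc a0 * b1 = a0 * b1 * (a1 * b1) := by rw [h11, mul_one]
    _ = (a0 * (b1 * a1)) * b1 := by noncomm_ring
    _ = 0 := by rw [h1, zero_mul]

lemma ortho10 : a1 * b0 = 0 := by
  have hb : b0 * a0 = 1 - b1 * a1 := eq_sub_of_add_eq hsum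
  have h1 : a1 * (b0 * a0) = 0 := by
    rw [hb, mul_sub, mul_one, ← mul_assoc, h11, one_mul, sub_self]
  calc a1 * b0 = a1 * b0 * (a0 * b0) := by rw [h00, mul_one]
    _ = (a1 * (b0 * a0)) * b0 := by noncomm_ring
    _ = 0 := by rw [h1, zero_mul]

end ortho

/-- the corner endomorphism `x ↦ b0 x a0` -/
def qh0 (h00 : a0 * b0 = 1) : R →ₙ+* R where
  toFun x := b0 * x * a0
  map_mul' x y := by
    have : (b0 * x * a0) * (b0 * y * a0) = (b0 * x) * (a0 * b0) * (y * a0) := by noncomm_ring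
    rw [this, h00, mul_one]; noncomm_ring
  map_zero' := by simp
  map_add' x y := by noncomm_ring

def qh1 (h11 : a1 * b1 = 1) : R →ₙ+* R where
  toFun x := b1 * x * a1
  map_mul' x y := by
    have : (b1 * x * a1) * (b1 * y * a1) = (b1 * x) * (a1 * b1) * (y * a1) := by noncomm_ring
    rw [this, h11, mul_one]; noncomm_ring
  map_zero' := by simp
  map_add' x y := by noncomm_ring

section Phi
include hsum

/-- the isomorphism `Φ : R ≅ M₂R`, `Φ(x)_{ij} = aᵢ x bⱼ` -/
def PhiH : R →ₙ+* M2 R where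
  toFun x := Matrix.of ![![a0 * x * b0, a0 * x * b1], ![a1 * x * b0, a1 * x * b1]]
  map_mul' x y := by
    have key : ∀ c dd : R, c * (x * y) * dd
        = c * x * b0 * (a0 * y * dd) + c * x * b1 * (a1 * y * dd) := by
      intro c dd
      have e1 : c * x * b0 * (a0 * y * dd) = (c * x) * ((b0 * a0) * (y * dd)) := by
        noncomm_ring
      have e2 : c * x * b1 * (a1 * y * dd) = (c * x) * ((b1 * a1) * (y * dd)) := by
        noncomm_ring
      rw [e1, e2, ← mul_add, ← add_mul, hsum, one_mul]
      noncomm_ring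
    ext i j
    fin_cases i <;> fin_cases j <;>
      simp [Matrix.mul_apply, Fin.sum_univ_two] <;> apply key
  map_zero' := by ext i j; fin_cases i <;> fin_cases j <;> simp
  map_add' x y := by
    ext i j
    fin_cases i <;> fin_cases j <;> simp [mul_add, add_mul]

end Phi

/-- the inverse map `Ψ : M₂R → R` -/
def PsiFun (m : M2 R) : R :=
  b0 * (m 0 0) * a0 + b0 * (m 0 1) * a1 + b1 * (m 1 0) * a0 + b1 * (m 1 1) * a1

section PhiPsi
include h00 h11 hsum

lemma PsiPhi (x : R) : PsiFun a0 a1 b0 b1 (PhiH a0 a1 b0 b1 hsum x) = x := by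
  show b0 * (a0 * x * b0) * a0 + b0 * (a0 * x * b1) * a1
      + b1 * (a1 * x * b0) * a0 + b1 * (a1 * x * b1) * a1 = x
  have : b0 * (a0 * x * b0) * a0 + b0 * (a0 * x * b1) * a1
      + b1 * (a1 * x * b0) * a0 + b1 * (a1 * x * b1) * a1
      = (b0 * a0 + b1 * a1) * x * (b0 * a0 + b1 * a1) := by noncomm_ring
  rw [this, hsum, one_mul, mul_one]

lemma PhiPsi (m : M2 R) : PhiH a0 a1 b0 b1 hsum (PsiFun a0 a1 b0 b1 m) = m := by
  have o01 := ortho01 a0 a1 b0 b1 h00 h11 hsum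
  have o10 := ortho10 a0 a1 b0 b1 h00 h11 hsum
  have key : ∀ c dd : R, c * (PsiFun a0 a1 b0 b1 m) * dd
      = (c * b0) * (m 0 0) * (a0 * dd) + (c * b0) * (m 0 1) * (a1 * dd)
        + (c * b1) * (m 1 0) * (a0 * dd) + (c * b1) * (m 1 1) * (a1 * dd) := by
    intro c dd
    show c * (b0 * (m 0 0) * a0 + b0 * (m 0 1) * a1 + b1 * (m 1 0) * a0
      + b1 * (m 1 1) * a1) * dd = _
    noncomm_ring
  ext i j
  rw [show ∀ z : R, (PhiH a0 a1 b0 b1 hsum z : M2 R) = Matrix.of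
      ![![a0 * z * b0, a0 * z * b1], ![a1 * z * b0, a1 * z * b1]] from fun z => rfl]
  fin_cases i <;> fin_cases j
  all_goals
    simp only [Matrix.of_apply, Matrix.cons_val', Matrix.cons_val_zero, Matrix.cons_val_one,
      Matrix.head_cons, Matrix.head_fin_const, Matrix.empty_val', Matrix.cons_val_fin_one]
  · show a0 * PsiFun a0 a1 b0 b1 m * b0 = m 0 0
    rw [key]; simp [h00, h11, o01, o10]
  · show a0 * PsiFun a0 a1 b0 b1 m * b1 = m 0 1
    rw [key]; simp [h00, h11, o01, o10]
  · show a1 * PsiFun a0 a1 b0 b1 m * b0 = m 1 0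
    rw [key]; simp [h00, h11, o01, o10]
  · show a1 * PsiFun a0 a1 b0 b1 m * b1 = m 1 1
    rw [key]; simp [h00, h11, o01, o10]

end PhiPsi
end SumRing
section SumRing2
variable {D : Type*} [Category D] (F : RingFunctor D)
variable {R : Type} [Ring R] (a0 a1 b0 b1 : R)
variable (h00 : a0 * b0 = 1) (h11 : a1 * b1 = 1) (hsum : b0 * a0 + b1 * a1 = 1)

section PsiH
include h00 h11

/-- `Ψ` as a ring homomorphism -/
def PsiH : M2 R →ₙ+* R where
  toFun := PsiFun a0 a1 b0 b1
  map_mul' m n := by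
    have inj : Function.Injective (PhiH a0 a1 b0 b1 hsum) := fun x y h => by
      rw [← PsiPhi a0 a1 b0 b1 h00 h11 hsum x, h, PsiPhi a0 a1 b0 b1 h00 h11 hsum]
    apply inj
    rw [map_mul (PhiH a0 a1 b0 b1 hsum), PhiPsi a0 a1 b0 b1 h00 h11 hsum,
      PhiPsi a0 a1 b0 b1 h00 h11 hsum, PhiPsi a0 a1 b0 b1 h00 h11 hsum]
  map_zero' := by
    have inj : Function.Injective (PhiH a0 a1 b0 b1 hsum) := fun x y h => by
      rw [← PsiPhi a0 a1 b0 b1 h00 h11 hsum x, h, PsiPhi a0 a1 b0 b1 h00 h11 hsum]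
    apply inj
    rw [map_zero (PhiH a0 a1 b0 b1 hsum), PhiPsi a0 a1 b0 b1 h00 h11 hsum]
  map_add' m n := by
    have inj : Function.Injective (PhiH a0 a1 b0 b1 hsum) := fun x y h => by
      rw [← PsiPhi a0 a1 b0 b1 h00 h11 hsum x, h, PsiPhi a0 a1 b0 b1 h00 h11 hsum]
    apply inj
    rw [map_add (PhiH a0 a1 b0 b1 hsum), PhiPsi a0 a1 b0 b1 h00 h11 hsum,
      PhiPsi a0 a1 b0 b1 h00 h11 hsum, PhiPsi a0 a1 b0 b1 h00 h11 hsum]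

lemma compPsiPhi : (PsiH a0 a1 b0 b1 h00 h11 hsum).comp (PhiH a0 a1 b0 b1 hsum)
    = NonUnitalRingHom.id R :=
  NonUnitalRingHom.ext fun x => PsiPhi a0 a1 b0 b1 h00 h11 hsum x

lemma compPhiPsi : (PhiH a0 a1 b0 b1 hsum).comp (PsiH a0 a1 b0 b1 h00 h11 hsum)
    = NonUnitalRingHom.id (M2 R) :=
  NonUnitalRingHom.ext fun m => PhiPsi a0 a1 b0 b1 h00 h11 hsum m

lemma isoFPhi : IsIso (F.map (PhiH a0 a1 b0 b1 hsum)) :=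
  F.isIso_of_inv _ (PsiH a0 a1 b0 b1 h00 h11 hsum)
    (compPsiPhi a0 a1 b0 b1 h00 h11 hsum) (compPhiPsi a0 a1 b0 b1 h00 h11 hsum)

lemma hq0rel : (PhiH a0 a1 b0 b1 hsum).comp (qh0 a0 b0 h00) = iota0 R := by
  have o01 := ortho01 a0 a1 b0 b1 h00 h11 hsum
  have o10 := ortho10 a0 a1 b0 b1 h00 h11 hsum
  refine NonUnitalRingHom.ext fun x => ?_
  show Matrix.of ![![a0 * (b0 * x * a0) * b0, a0 * (b0 * x * a0) * b1],
    ![a1 * (b0 * x * a0) * b0, a1 * (b0 * x * a0) * b1]] = Matrix.single 0 0 x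
  have hstd : Matrix.single (0 : Fin 2) (0 : Fin 2) x
      = Matrix.of ![![x, 0], ![0, 0]] := by
    ext i j
    fin_cases i <;> fin_cases j <;> simp [Matrix.single]
  rw [hstd]
  have e00 : a0 * (b0 * x * a0) * b0 = x := by
    have : a0 * (b0 * x * a0) * b0 = (a0 * b0) * x * (a0 * b0) := by noncomm_ring
    rw [this, h00, one_mul, mul_one]
  have e01 : a0 * (b0 * x * a0) * b1 = 0 := by
    have : a0 * (b0 * x * a0) * b1 = ((a0 * b0) * x) * (a0 * b1) := by noncomm_ring
    rw [this, o01, mul_zero]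
  have e10 : a1 * (b0 * x * a0) * b0 = 0 := by
    have : a1 * (b0 * x * a0) * b0 = (a1 * b0) * (x * (a0 * b0)) := by noncomm_ring
    rw [this, o10, zero_mul]
  have e11 : a1 * (b0 * x * a0) * b1 = 0 := by
    have : a1 * (b0 * x * a0) * b1 = (a1 * b0) * (x * (a0 * b1)) := by noncomm_ring
    rw [this, o10, zero_mul]
  rw [e00, e01, e10, e11]

lemma hq1rel : (PhiH a0 a1 b0 b1 hsum).comp (qh1 a1 b1 h11) = iota1 R := by
  have o01 := ortho01 a0 a1 b0 b1 h00 h11 hsum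
  have o10 := ortho10 a0 a1 b0 b1 h00 h11 hsum
  refine NonUnitalRingHom.ext fun x => ?_
  show Matrix.of ![![a0 * (b1 * x * a1) * b0, a0 * (b1 * x * a1) * b1],
    ![a1 * (b1 * x * a1) * b0, a1 * (b1 * x * a1) * b1]] = Matrix.single 1 1 x
  have hstd : Matrix.single (1 : Fin 2) (1 : Fin 2) x
      = Matrix.of ![![0, 0], ![0, x]] := by
    ext i j
    fin_cases i <;> fin_cases j <;> simp [Matrix.single]
  rw [hstd]
  have e00 : a0 * (b1 * x * a1) * b0 = 0 := by
    have : a0 * (b1 * x * a1) * b0 = (a0 * b1) * (x * (a1 * b0)) := by noncomm_ring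
    rw [this, o01, zero_mul]
  have e01 : a0 * (b1 * x * a1) * b1 = 0 := by
    have : a0 * (b1 * x * a1) * b1 = (a0 * b1) * (x * (a1 * b1)) := by noncomm_ring
    rw [this, o01, zero_mul]
  have e10 : a1 * (b1 * x * a1) * b0 = 0 := by
    have : a1 * (b1 * x * a1) * b0 = ((a1 * b1) * x) * (a1 * b0) := by noncomm_ring
    rw [this, o10, mul_zero]
  have e11 : a1 * (b1 * x * a1) * b1 = x := by
    have : a1 * (b1 * x * a1) * b1 = (a1 * b1) * x * (a1 * b1) := by noncomm_ring
    rw [this, h11, one_mul, mul_one]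
  rw [e00, e01, e10, e11]

end PsiH
end SumRing2
section QTriv
variable {D : Type*} [Category D] (F : RingFunctor D)
variable {R : Type} [Ring R] (a0 a1 b0 b1 : R)
variable (h00 : a0 * b0 = 1) (h11 : a1 * b1 = 1) (hsum : b0 * a0 + b1 * a1 = 1)

section T
include h00 h11 hsum

lemma trans2 (hM : IsIso (F.map (iota0 (M2 R)))) :
    IsIso (F.map (iota0 (M2 (M2 R)))) :=
  transferStable F (M2map (PhiH a0 a1 b0 b1 hsum)) (M2map (PsiH a0 a1 b0 b1 h00 h11 hsum))
    (by rw [M2map_comp, compPsiPhi, M2map_id])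
    (by rw [M2map_comp, compPhiPsi, M2map_id]) hM

lemma trans3 (hM : IsIso (F.map (iota0 (M2 R)))) :
    IsIso (F.map (iota0 (M2 (M2 (M2 R))))) :=
  transferStable F (M2map (M2map (PhiH a0 a1 b0 b1 hsum)))
    (M2map (M2map (PsiH a0 a1 b0 b1 h00 h11 hsum)))
    (by rw [M2map_comp, M2map_comp, compPsiPhi, M2map_id, M2map_id])
    (by rw [M2map_comp, M2map_comp, compPhiPsi, M2map_id, M2map_id])
    (trans2 F a0 a1 b0 b1 h00 h11 hsum hM)

lemma FPhi_eq0 (hM : IsIso (F.map (iota0 (M2 R)))) :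
    F.map (PhiH a0 a1 b0 b1 hsum) = F.map (iota0 R) := by
  have o01 := ortho01 a0 a1 b0 b1 h00 h11 hsum
  have o10 := ortho10 a0 a1 b0 b1 h00 h11 hsum
  set V : M2 R := Matrix.of ![![a0, 0], ![a1, 0]] with hVd
  set W : M2 R := Matrix.of ![![b0, b1], ![0, 0]] with hWd
  have hVW : V * W = 1 := by
    ext i j
    fin_cases i <;> fin_cases j <;>
      simp [hVd, hWd, Matrix.mul_apply, Fin.sum_univ_two, Matrix.one_apply, h00, h11, o01, o10]
  have hWV : W * V = Matrix.single 0 0 (1 : R) := by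
    ext i j
    fin_cases i <;> fin_cases j <;>
      simp [hVd, hWd, Matrix.mul_apply, Fin.sum_univ_two, Matrix.single, hsum]
  have hWf : ∀ x, (W * V) * (iota0 R x) = iota0 R x := by
    intro x
    rw [hWV]
    show Matrix.single 0 0 (1 : R) * Matrix.single 0 0 x = _
    rw [Matrix.single_mul_single_same, one_mul]
    rfl
  have hfW : ∀ x, (iota0 R x) * (W * V) = iota0 R x := by
    intro x
    rw [hWV]
    show Matrix.single 0 0 x * Matrix.single 0 0 (1 : R) = _
    rw [Matrix.single_mul_single_same, mul_one]
    rfl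
  have hg : ∀ x, PhiH a0 a1 b0 b1 hsum x = V * (iota0 R x) * W := by
    intro x
    have e1 : V * Matrix.single 0 0 x = Matrix.of ![![a0 * x, 0], ![a1 * x, 0]] := by
      ext i j
      fin_cases i <;> fin_cases j <;>
        simp [hVd, Matrix.mul_apply, Fin.sum_univ_two, Matrix.single]
    show Matrix.of ![![a0 * x * b0, a0 * x * b1], ![a1 * x * b0, a1 * x * b1]]
      = V * Matrix.single 0 0 x * W
    rw [e1]
    ext i j
    fin_cases i <;> fin_cases j <;>
      simp [hWd, Matrix.mul_apply, Fin.sum_univ_two, mul_assoc]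
  exact conjLemma F hM (trans2 F a0 a1 b0 b1 h00 h11 hsum hM)
    (trans3 F a0 a1 b0 b1 h00 h11 hsum hM) (iota0 R) (PhiH a0 a1 b0 b1 hsum)
    V W hVW hWf hfW hg

lemma FPhi_eq1 (hM : IsIso (F.map (iota0 (M2 R)))) :
    F.map (PhiH a0 a1 b0 b1 hsum) = F.map (iota1 R) := by
  have o01 := ortho01 a0 a1 b0 b1 h00 h11 hsum
  have o10 := ortho10 a0 a1 b0 b1 h00 h11 hsum
  set V : M2 R := Matrix.of ![![0, a0], ![0, a1]] with hVd
  set W : M2 R := Matrix.of ![![0, 0], ![b0, b1]] with hWd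
  have hVW : V * W = 1 := by
    ext i j
    fin_cases i <;> fin_cases j <;>
      simp [hVd, hWd, Matrix.mul_apply, Fin.sum_univ_two, Matrix.one_apply, h00, h11, o01, o10]
  have hWV : W * V = Matrix.single 1 1 (1 : R) := by
    ext i j
    fin_cases i <;> fin_cases j <;>
      simp [hVd, hWd, Matrix.mul_apply, Fin.sum_univ_two, Matrix.single, hsum]
  have hWf : ∀ x, (W * V) * (iota1 R x) = iota1 R x := by
    intro x
    rw [hWV]
    show Matrix.single 1 1 (1 : R) * Matrix.single 1 1 x = _
    rw [Matrix.single_mul_single_same, one_mul]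
    rfl
  have hfW : ∀ x, (iota1 R x) * (W * V) = iota1 R x := by
    intro x
    rw [hWV]
    show Matrix.single 1 1 x * Matrix.single 1 1 (1 : R) = _
    rw [Matrix.single_mul_single_same, mul_one]
    rfl
  have hg : ∀ x, PhiH a0 a1 b0 b1 hsum x = V * (iota1 R x) * W := by
    intro x
    have e1 : V * Matrix.single 1 1 x = Matrix.of ![![0, a0 * x], ![0, a1 * x]] := by
      ext i j
      fin_cases i <;> fin_cases j <;>
        simp [hVd, Matrix.mul_apply, Fin.sum_univ_two, Matrix.single]
    show Matrix.of ![![a0 * x * b0, a0 * x * b1], ![a1 * x * b0, a1 * x * b1]]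
      = V * Matrix.single 1 1 x * W
    rw [e1]
    ext i j
    fin_cases i <;> fin_cases j <;>
      simp [hWd, Matrix.mul_apply, Fin.sum_univ_two, mul_assoc]
  exact conjLemma F hM (trans2 F a0 a1 b0 b1 h00 h11 hsum hM)
    (trans3 F a0 a1 b0 b1 h00 h11 hsum hM) (iota1 R) (PhiH a0 a1 b0 b1 hsum)
    V W hVW hWf hfW hg

lemma Fq0_triv (hM : IsIso (F.map (iota0 (M2 R)))) :
    F.map (qh0 a0 b0 h00) = 𝟙 (F.obj R) := by
  have hc := congrArg F.map (hq0rel a0 a1 b0 b1 h00 h11 hsum)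
  rw [F.map_comp] at hc
  rw [← FPhi_eq0 F a0 a1 b0 b1 h00 h11 hsum hM] at hc
  have hmono : Mono (F.map (PhiH a0 a1 b0 b1 hsum)) := by
    have := isoFPhi F a0 a1 b0 b1 h00 h11 hsum
    infer_instance
  have : F.map (qh0 a0 b0 h00) ≫ F.map (PhiH a0 a1 b0 b1 hsum)
      = 𝟙 (F.obj R) ≫ F.map (PhiH a0 a1 b0 b1 hsum) := by
    rw [Category.id_comp]; exact hc
  exact (cancel_mono _).1 this

lemma Fq1_triv (hM : IsIso (F.map (iota0 (M2 R)))) :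
    F.map (qh1 a1 b1 h11) = 𝟙 (F.obj R) := by
  have hc := congrArg F.map (hq1rel a0 a1 b0 b1 h00 h11 hsum)
  rw [F.map_comp] at hc
  rw [← FPhi_eq1 F a0 a1 b0 b1 h00 h11 hsum hM] at hc
  have hmono : Mono (F.map (PhiH a0 a1 b0 b1 hsum)) := by
    have := isoFPhi F a0 a1 b0 b1 h00 h11 hsum
    infer_instance
  have : F.map (qh1 a1 b1 h11) ≫ F.map (PhiH a0 a1 b0 b1 hsum)
      = 𝟙 (F.obj R) ≫ F.map (PhiH a0 a1 b0 b1 hsum) := by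
    rw [Category.id_comp]; exact hc
  exact (cancel_mono _).1 this

end T
end QTriv
section Helpers
variable {D : Type*} [Category D]

lemma comp_lift_biprod [HasZeroMorphisms D] {W X Y Z : D} [HasBinaryBiproduct Y Z]
    (f : W ⟶ X) (g : X ⟶ Y) (h : X ⟶ Z) :
    f ≫ biprod.lift g h = biprod.lift (f ≫ g) (f ≫ h) := by
  apply biprod.hom_ext <;> simp

lemma lift_id_zero_eq_inl [HasZeroMorphisms D] {X Y : D} [HasBinaryBiproduct X Y] :
    biprod.lift (𝟙 X) (0 : X ⟶ Y) = biprod.inl := by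
  apply biprod.hom_ext <;> simp

lemma lift_zero_id_eq_inr [HasZeroMorphisms D] {X Y : D} [HasBinaryBiproduct X Y] :
    biprod.lift (0 : Y ⟶ X) (𝟙 Y) = biprod.inr := by
  apply biprod.hom_ext <;> simp

end Helpers

theorem sum_ring_codiagonal_and_infinite_sum_ring_vanishing
    {D : Type*} [Category D] [Preadditive D] [HasBinaryBiproducts D]
    (F : RingFunctor D)
    (R : Type) [Ring R]
    (a0 a1 b0 b1 : R)
    (h00 : a0 * b0 = 1) (h11 : a1 * b1 = 1)
    (hsum : b0 * a0 + b1 * a1 = 1)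
    -- `⊞ : R × R → R` is the (unital) ring homomorphism
    -- `(a,b) ↦ β₀aα₀ + β₁bα₁`.
    (box : R × R →+* R)
    (hbox : ∀ p : R × R, box p = b0 * p.1 * a0 + b1 * p.2 * a1)
    -- `γ = ⟨F(π₀), F(π₁)⟩` is an isomorphism
    (γ : F.obj (R × R) ⟶ F.obj R ⊞ F.obj R)
    (hγ : γ = biprod.lift (F.map (NonUnitalRingHom.fst R R))
                          (F.map (NonUnitalRingHom.snd R R)))
    (hγiso : IsIso γ)
    (h₁ : F.M2Stable R) (h₂ : F.M2Stable (M2 R)) :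
    (biprod.inl ≫ inv γ ≫ F.map box.toNonUnitalRingHom = 𝟙 (F.obj R) ∧
     biprod.inr ≫ inv γ ≫ F.map box.toNonUnitalRingHom = 𝟙 (F.obj R)) ∧
    -- if moreover `R` is an infinite sum ring, then `F(R) = 0`:
    (∀ inf : R →+* R, (∀ a : R, box (a, inf a) = inf a) →
      IsZero (F.obj R)) := by
  have hM : IsIso (F.map (iota0 (M2 R))) := h₂
  have Fq0 := Fq0_triv F a0 a1 b0 b1 h00 h11 hsum hM
  have Fq1 := Fq1_triv F a0 a1 b0 b1 h00 h11 hsum hM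
  set box' : R × R →ₙ+* R := box.toNonUnitalRingHom with hbox'd
  set fstH : R × R →ₙ+* R := NonUnitalRingHom.fst R R with hfstd
  set sndH : R × R →ₙ+* R := NonUnitalRingHom.snd R R with hsndd
  set zH : R →ₙ+* R := 0 with hzd
  -- First coordinate
  have hb0 : box'.comp (fstH.prod 0) = (qh0 a0 b0 h00).comp fstH := by
    refine NonUnitalRingHom.ext fun p => ?_
    show box (p.1, 0) = b0 * p.1 * a0
    rw [hbox]
    simp
  have hb1 : box'.comp ((0 : R × R →ₙ+* R).prod sndH) = (qh1 a1 b1 h11).comp sndH := by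
    refine NonUnitalRingHom.ext fun p => ?_
    show box (0, p.2) = b1 * p.2 * a1
    rw [hbox]
    simp
  have c2 : F.map (fstH.prod 0) ≫ γ
      = biprod.lift (F.map fstH) (F.map sndH ≫ F.map zH) := by
    rw [hγ, comp_lift_biprod]
    congr 1
    · rw [← F.map_comp, NonUnitalRingHom.fst_comp_prod]
    · rw [← F.map_comp]
      have : sndH.comp (fstH.prod 0) = zH.comp sndH := by
        rw [NonUnitalRingHom.snd_comp_prod, hzd]
        refine NonUnitalRingHom.ext fun p => rfl
      rw [this, F.map_comp]
  have c2' : F.map ((0 : R × R →ₙ+* R).prod sndH) ≫ γ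
      = biprod.lift (F.map fstH ≫ F.map zH) (F.map sndH) := by
    rw [hγ, comp_lift_biprod]
    congr 1
    · rw [← F.map_comp]
      have : fstH.comp ((0 : R × R →ₙ+* R).prod sndH) = zH.comp fstH := by
        rw [NonUnitalRingHom.fst_comp_prod, hzd]
        refine NonUnitalRingHom.ext fun p => rfl
      rw [this, F.map_comp]
    · rw [← F.map_comp, NonUnitalRingHom.snd_comp_prod]
  have c3 : γ ≫ biprod.fst = F.map fstH := by rw [hγ, biprod.lift_fst]
  have c4 : γ ≫ biprod.snd = F.map sndH := by rw [hγ, biprod.lift_snd]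
  have main0 : biprod.fst ≫ F.map (qh0 a0 b0 h00)
      = biprod.lift biprod.fst (biprod.snd ≫ F.map zH) ≫ (inv γ ≫ F.map box') := by
    have : Epi γ := by infer_instance
    apply (cancel_epi γ).1
    calc γ ≫ biprod.fst ≫ F.map (qh0 a0 b0 h00)
        = (γ ≫ biprod.fst) ≫ F.map (qh0 a0 b0 h00) := by rw [Category.assoc]
      _ = F.map fstH ≫ F.map (qh0 a0 b0 h00) := by rw [c3]
      _ = F.map (fstH.prod 0) ≫ F.map box' := by
          rw [← F.map_comp, ← F.map_comp, hb0]
      _ = (F.map (fstH.prod 0) ≫ γ) ≫ (inv γ ≫ F.map box') := by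
          rw [Category.assoc, IsIso.hom_inv_id_assoc]
      _ = biprod.lift (F.map fstH) (F.map sndH ≫ F.map zH) ≫ (inv γ ≫ F.map box') := by
          rw [c2]
      _ = γ ≫ biprod.lift biprod.fst (biprod.snd ≫ F.map zH) ≫ (inv γ ≫ F.map box') := by
          have c5 : biprod.lift (F.map fstH) (F.map sndH ≫ F.map zH)
              = γ ≫ biprod.lift biprod.fst (biprod.snd ≫ F.map zH) := by
            rw [comp_lift_biprod, c3, ← Category.assoc, c4]
          rw [c5]
          simp only [Category.assoc]
  have main1 : biprod.snd ≫ F.map (qh1 a1 b1 h11)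
      = biprod.lift (biprod.fst ≫ F.map zH) biprod.snd ≫ (inv γ ≫ F.map box') := by
    have : Epi γ := by infer_instance
    apply (cancel_epi γ).1
    calc γ ≫ biprod.snd ≫ F.map (qh1 a1 b1 h11)
        = (γ ≫ biprod.snd) ≫ F.map (qh1 a1 b1 h11) := by rw [Category.assoc]
      _ = F.map sndH ≫ F.map (qh1 a1 b1 h11) := by rw [c4]
      _ = F.map ((0 : R × R →ₙ+* R).prod sndH) ≫ F.map box' := by
          rw [← F.map_comp, ← F.map_comp, hb1]
      _ = (F.map ((0 : R × R →ₙ+* R).prod sndH) ≫ γ) ≫ (inv γ ≫ F.map box') := by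
          rw [Category.assoc, IsIso.hom_inv_id_assoc]
      _ = biprod.lift (F.map fstH ≫ F.map zH) (F.map sndH) ≫ (inv γ ≫ F.map box') := by
          rw [c2']
      _ = γ ≫ biprod.lift (biprod.fst ≫ F.map zH) biprod.snd ≫ (inv γ ≫ F.map box') := by
          have c5 : biprod.lift (F.map fstH ≫ F.map zH) (F.map sndH)
              = γ ≫ biprod.lift (biprod.fst ≫ F.map zH) biprod.snd := by
            rw [comp_lift_biprod, c4, ← Category.assoc, c3]
          rw [c5]
          simp only [Category.assoc]
  have goalA : biprod.inl ≫ inv γ ≫ F.map box' = 𝟙 (F.obj R) := by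
    have h := congrArg (fun t => biprod.inl ≫ t) main0
    simp only [biprod.inl_fst_assoc] at h
    rw [Fq0] at h
    rw [← Category.assoc, comp_lift_biprod, biprod.inl_fst, biprod.inl_snd_assoc,
      zero_comp, lift_id_zero_eq_inl] at h
    exact h.symm
  have goalB : biprod.inr ≫ inv γ ≫ F.map box' = 𝟙 (F.obj R) := by
    have h := congrArg (fun t => biprod.inr ≫ t) main1
    simp only [biprod.inr_snd_assoc] at h
    rw [Fq1] at h
    rw [← Category.assoc, comp_lift_biprod, biprod.inr_snd, biprod.inr_fst_assoc,
      zero_comp, lift_zero_id_eq_inr] at h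
    exact h.symm
  refine ⟨⟨goalA, goalB⟩, ?_⟩
  intro inf hinf
  set inf' : R →ₙ+* R := inf.toNonUnitalRingHom with hinfd
  have hIcomp : box'.comp ((NonUnitalRingHom.id R).prod inf') = inf' := by
    refine NonUnitalRingHom.ext fun a => ?_
    show box (a, inf a) = inf a
    exact hinf a
  have cI : F.map ((NonUnitalRingHom.id R).prod inf') ≫ γ
      = biprod.lift (𝟙 (F.obj R)) (F.map inf') := by
    rw [hγ, comp_lift_biprod]
    congr 1
    · rw [← F.map_comp, NonUnitalRingHom.fst_comp_prod, F.map_id]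
    · rw [← F.map_comp, NonUnitalRingHom.snd_comp_prod]
  have e : F.map inf' = 𝟙 (F.obj R) + F.map inf' := by
    calc F.map inf'
        = F.map ((NonUnitalRingHom.id R).prod inf') ≫ F.map box' := by
          rw [← F.map_comp, hIcomp]
      _ = F.map ((NonUnitalRingHom.id R).prod inf') ≫ γ ≫ (inv γ ≫ F.map box') := by
          rw [IsIso.hom_inv_id_assoc]
      _ = biprod.lift (𝟙 (F.obj R)) (F.map inf') ≫ (inv γ ≫ F.map box') := by
          rw [← Category.assoc, cI]
      _ = (𝟙 (F.obj R) ≫ biprod.inl + F.map inf' ≫ biprod.inr) ≫ (inv γ ≫ F.map box') := by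
          rw [biprod.lift_eq]
      _ = 𝟙 (F.obj R) + F.map inf' := by
          simp only [Preadditive.add_comp, Category.id_comp, Category.assoc,
            goalA, goalB, Category.comp_id]
  have hzero : 𝟙 (F.obj R) = 0 := right_eq_add.mp e
  exact (IsZero.iff_id_eq_zero (F.obj R)).mpr hzero

end
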